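/- Suppose P₀ has compact support in ℝ^N. For the interpolant y(t) = α(t)x₀ + β(t)z with β(t) > 0, the velocity field b(y,t) = E[∂_t y(t)|y(t)=y] is differentiable in y with Jacobian ∂b(y,t)/∂y = (α(t)/β(t)²)( α̇(t) − β̇(t)α(t)/β(t) ) Cov[P_{t,y}] + (β̇(t)/β(t)) I_N, where Cov[P_{t,y}] is the covariance matrix of the tilted posterior measure P(x | y(t)=y). -/

import Mathlib

open MeasureTheory ProbabilityTheory

noncomputable section

/-- Euclidean dot product on `ℝ^N`. -/
def dotp {N : ℕ} (x y : Fin N → ℝ) : ℝ := ∑ i, x i * y i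

/-- Unnormalized density of the tilted measure at observation `y`:
`exp((α/β²)⟨y,x⟩ − (α²/(2β²))‖x‖²)`, with `a = α(t)`, `b = β(t)`. -/
def tiltDen {N : ℕ} (a b : ℝ) (y x : Fin N → ℝ) : ℝ :=
  Real.exp (a / b ^ 2 * dotp y x - a ^ 2 / (2 * b ^ 2) * dotp x x)

/-- Posterior mean `E[x₀ | y(t) = y]` of the tilted measure. -/
def tiltMean {N : ℕ} (P₀ : Measure (Fin N → ℝ)) (a b : ℝ) (y : Fin N → ℝ) :
    Fin N → ℝ :=
  fun i => (∫ x, tiltDen a b y x * x i ∂P₀) / (∫ x, tiltDen a b y x ∂P₀)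

/-- Covariance matrix of the tilted posterior measure `P_{t,y}`. -/
def tiltCov {N : ℕ} (P₀ : Measure (Fin N → ℝ)) (a b : ℝ) (y : Fin N → ℝ)
    (i j : Fin N) : ℝ :=
  (∫ x, tiltDen a b y x * (x i * x j) ∂P₀) / (∫ x, tiltDen a b y x ∂P₀)
    - tiltMean P₀ a b y i * tiltMean P₀ a b y j

/-- The velocity field `b(y,t) = (β̇/β) y + (α̇ − β̇α/β) E[x₀|y(t)=y]`
(here `a = α(t)`, `b = β(t)`, `a' = α̇(t)`, `b' = β̇(t)`). -/
def velField {N : ℕ} (P₀ : Measure (Fin N → ℝ)) (a b a' b' : ℝ)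
    (y : Fin N → ℝ) : Fin N → ℝ :=
  fun i => (b' / b) * y i + (a' - b' * a / b) * tiltMean P₀ a b y i


namespace VFJ

open Metric ContinuousLinearMap

variable {N : ℕ}

def dotCLM (x : Fin N → ℝ) : (Fin N → ℝ) →L[ℝ] ℝ :=
  ∑ i, x i • ContinuousLinearMap.proj i

lemma dotCLM_apply (x v : Fin N → ℝ) : dotCLM x v = dotp v x := by
  simp [dotCLM, dotp, ContinuousLinearMap.sum_apply, mul_comm]

lemma abs_dotp_le (u w : Fin N → ℝ) : |dotp u w| ≤ N * (‖u‖ * ‖w‖) := by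
  unfold dotp
  calc |∑ i, u i * w i| ≤ ∑ i, |u i * w i| := Finset.abs_sum_le_sum_abs _ _
    _ ≤ ∑ _i : Fin N, ‖u‖ * ‖w‖ := Finset.sum_le_sum fun i _ => by
        rw [abs_mul]
        exact mul_le_mul (norm_le_pi_norm u i) (norm_le_pi_norm w i)
          (abs_nonneg _) (norm_nonneg _)
    _ = N * (‖u‖ * ‖w‖) := by simp [Finset.sum_const, Finset.card_univ]

lemma norm_dotCLM_le (x : Fin N → ℝ) : ‖dotCLM x‖ ≤ N * ‖x‖ :=
  ContinuousLinearMap.opNorm_le_bound _ (by positivity) fun v => by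
    rw [dotCLM_apply]
    calc ‖dotp v x‖ ≤ N * (‖v‖ * ‖x‖) := by
          rw [Real.norm_eq_abs]; exact abs_dotp_le v x
      _ = N * ‖x‖ * ‖v‖ := by ring

lemma continuous_dotCLM : Continuous fun x : Fin N → ℝ => dotCLM x :=
  continuous_finset_sum _ fun i _ => (continuous_apply i).smul continuous_const

lemma tiltDen_pos (a b : ℝ) (y x : Fin N → ℝ) : 0 < tiltDen a b y x :=
  Real.exp_pos _

lemma continuous_tiltDen_x (a b : ℝ) (y : Fin N → ℝ) :
    Continuous (tiltDen a b y) := by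
  unfold tiltDen dotp
  exact Real.continuous_exp.comp <| by continuity

lemma hasFDerivAt_tiltDen (a b : ℝ) (x y : Fin N → ℝ) :
    HasFDerivAt (fun y => tiltDen a b y x)
      (tiltDen a b y x • ((a / b ^ 2) • dotCLM x)) y := by
  have h1 : HasFDerivAt (fun y : Fin N → ℝ => dotp y x) (dotCLM x) y := by
    have heq : (fun y : Fin N → ℝ => dotp y x) = dotCLM x :=
      funext fun y => (dotCLM_apply x y).symm
    rw [heq]
    exact (dotCLM x).hasFDerivAt
  have h2 : HasFDerivAt
      (fun y : Fin N → ℝ => a / b ^ 2 * dotp y x - a ^ 2 / (2 * b ^ 2) * dotp x x)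
      ((a / b ^ 2) • dotCLM x) y := (h1.const_mul (a / b ^ 2)).sub_const _
  exact h2.exp

lemma tiltDen_le {a b R K : ℝ} (hR : 0 ≤ R) (hK : 0 ≤ K) {y' x : Fin N → ℝ}
    (hx : ‖x‖ ≤ R) (hy : ‖y'‖ ≤ K) :
    tiltDen a b y' x
      ≤ Real.exp (|a / b ^ 2| * (N * (K * R)) + |a ^ 2 / (2 * b ^ 2)| * (N * (R * R))) := by
  apply Real.exp_le_exp.2
  have h1 := abs_dotp_le y' x
  have h2 := abs_dotp_le x x
  have e1 : a / b ^ 2 * dotp y' x ≤ |a / b ^ 2| * (N * (K * R)) := by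
    calc a / b ^ 2 * dotp y' x ≤ |a / b ^ 2 * dotp y' x| := le_abs_self _
      _ = |a / b ^ 2| * |dotp y' x| := abs_mul _ _
      _ ≤ |a / b ^ 2| * (N * (K * R)) := by
          have : |dotp y' x| ≤ N * (K * R) := by
            refine h1.trans ?_
            have := norm_nonneg y'; have := norm_nonneg x
            gcongr
          gcongr
  have e2 : -(a ^ 2 / (2 * b ^ 2) * dotp x x) ≤ |a ^ 2 / (2 * b ^ 2)| * (N * (R * R)) := by
    calc -(a ^ 2 / (2 * b ^ 2) * dotp x x) ≤ |a ^ 2 / (2 * b ^ 2) * dotp x x| :=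
          neg_le_abs _
      _ = |a ^ 2 / (2 * b ^ 2)| * |dotp x x| := abs_mul _ _
      _ ≤ |a ^ 2 / (2 * b ^ 2)| * (N * (R * R)) := by
          have : |dotp x x| ≤ N * (R * R) := by
            refine h2.trans ?_
            have := norm_nonneg x
            gcongr
          gcongr
  linarith

lemma tiltDen_ge {a b R K : ℝ} (hR : 0 ≤ R) (hK : 0 ≤ K) {y' x : Fin N → ℝ}
    (hx : ‖x‖ ≤ R) (hy : ‖y'‖ ≤ K) :
    Real.exp (-(|a / b ^ 2| * (N * (K * R)) + |a ^ 2 / (2 * b ^ 2)| * (N * (R * R))))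
      ≤ tiltDen a b y' x := by
  apply Real.exp_le_exp.2
  have h1 := abs_dotp_le y' x
  have h2 := abs_dotp_le x x
  have e1 : -(|a / b ^ 2| * (N * (K * R))) ≤ a / b ^ 2 * dotp y' x := by
    have habs : |a / b ^ 2 * dotp y' x| ≤ |a / b ^ 2| * (N * (K * R)) := by
      rw [abs_mul]
      have : |dotp y' x| ≤ N * (K * R) := by
        refine h1.trans ?_
        have := norm_nonneg y'; have := norm_nonneg x
        gcongr
      gcongr
    have := neg_abs_le (a / b ^ 2 * dotp y' x)
    linarith
  have e2 : -(|a ^ 2 / (2 * b ^ 2)| * (N * (R * R))) ≤ -(a ^ 2 / (2 * b ^ 2) * dotp x x) := by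
    have habs : |a ^ 2 / (2 * b ^ 2) * dotp x x| ≤ |a ^ 2 / (2 * b ^ 2)| * (N * (R * R)) := by
      rw [abs_mul]
      have : |dotp x x| ≤ N * (R * R) := by
        refine h2.trans ?_
        have := norm_nonneg x
        gcongr
      gcongr
    have := le_abs_self (a ^ 2 / (2 * b ^ 2) * dotp x x)
    linarith
  linarith


lemma ae_norm_le (P₀ : Measure (Fin N → ℝ)) [IsProbabilityMeasure P₀] {R : ℝ}
    (h : P₀ {x | ‖x‖ ≤ R} = 1) : ∀ᵐ x ∂P₀, ‖x‖ ≤ R := by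
  have hm : MeasurableSet {x : Fin N → ℝ | ‖x‖ ≤ R} :=
    (isClosed_le continuous_norm continuous_const).measurableSet
  have := (prob_compl_eq_zero_iff (μ := P₀) hm).2 h
  rw [ae_iff]
  exact this

lemma integ_tilt (P₀ : Measure (Fin N → ℝ)) [IsProbabilityMeasure P₀] {R : ℝ}
    (hR : ∀ᵐ x ∂P₀, ‖x‖ ≤ R) (a b : ℝ) (y : Fin N → ℝ)
    (g : (Fin N → ℝ) → ℝ) (hg : Continuous g) :
    Integrable (fun x => tiltDen a b y x * g x) P₀ := by
  obtain ⟨C, hC⟩ := (isCompact_closedBall (0 : Fin N → ℝ) R).exists_bound_of_continuousOn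
    ((continuous_tiltDen_x a b y).mul hg).continuousOn
  refine Integrable.mono' (integrable_const C)
    (((continuous_tiltDen_x a b y).mul hg).aestronglyMeasurable) ?_
  filter_upwards [hR] with x hx
  exact hC x (by simpa [Metric.mem_closedBall, dist_zero_right] using hx)

lemma hasFDerivAt_I (P₀ : Measure (Fin N → ℝ)) [IsProbabilityMeasure P₀] {R : ℝ}
    (hR0 : 0 ≤ R) (hR : ∀ᵐ x ∂P₀, ‖x‖ ≤ R) (a b : ℝ) (y : Fin N → ℝ)
    (g : (Fin N → ℝ) → ℝ) (hg : Continuous g) :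
    HasFDerivAt (fun y => ∫ x, tiltDen a b y x * g x ∂P₀)
      ((a / b ^ 2) • ∑ j, (∫ x, tiltDen a b y x * g x * x j ∂P₀) •
        (ContinuousLinearMap.proj j : (Fin N → ℝ) →L[ℝ] ℝ)) y := by
  set c := a / b ^ 2 with hc
  obtain ⟨G, hG⟩ := (isCompact_closedBall (0 : Fin N → ℝ) R).exists_bound_of_continuousOn
    hg.continuousOn
  have hG0 : 0 ≤ G := le_trans (norm_nonneg _)
    (hG 0 (by simp [Metric.mem_closedBall, hR0]))
  set E : ℝ := Real.exp (|c| * (N * ((‖y‖ + 1) * R)) + |a ^ 2 / (2 * b ^ 2)| * (N * (R * R)))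
    with hE
  have hE0 : 0 < E := Real.exp_pos _
  have key := hasFDerivAt_integral_of_dominated_of_fderiv_le
    (F := fun y' x => tiltDen a b y' x * g x)
    (F' := fun y' x => (tiltDen a b y' x * g x) • (c • dotCLM x))
    (x₀ := y) (bound := fun _ => E * G * (|c| * (N * R))) (μ := P₀)
    (s := ball y 1) (ball_mem_nhds y one_pos)
    (Filter.Eventually.of_forall fun y' =>
      (((continuous_tiltDen_x a b y').mul hg).aestronglyMeasurable))
    (integ_tilt P₀ hR a b y g hg)
    ((((continuous_tiltDen_x a b y).mul hg).smul
      (continuous_dotCLM.const_smul c)).aestronglyMeasurable)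
    ?_ (integrable_const _) ?_
  · refine key.congr_fderiv ?_
    symm
    have hint : ∀ j : Fin N, Integrable
        (fun x => (tiltDen a b y x * g x * x j) •
          (ContinuousLinearMap.proj j : (Fin N → ℝ) →L[ℝ] ℝ)) P₀ := by
      intro j
      have : Integrable (fun x => tiltDen a b y x * (g x * x j)) P₀ :=
        integ_tilt P₀ hR a b y _ (hg.mul (continuous_apply j))
      simpa [mul_assoc] using this.smul_const _
    calc ((a / b ^ 2) • ∑ j, (∫ x, tiltDen a b y x * g x * x j ∂P₀) •
          (ContinuousLinearMap.proj j : (Fin N → ℝ) →L[ℝ] ℝ))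
        = c • ∑ j, ∫ x, (tiltDen a b y x * g x * x j) •
            (ContinuousLinearMap.proj j : (Fin N → ℝ) →L[ℝ] ℝ) ∂P₀ := by
          rw [← hc]; congr 1; exact Finset.sum_congr rfl fun j _ =>
            (integral_smul_const (fun x => tiltDen a b y x * g x * x j)
              (ContinuousLinearMap.proj j : (Fin N → ℝ) →L[ℝ] ℝ)).symm
      _ = c • ∫ x, ∑ j, (tiltDen a b y x * g x * x j) •
            (ContinuousLinearMap.proj j : (Fin N → ℝ) →L[ℝ] ℝ) ∂P₀ := by
          rw [integral_finset_sum _ fun j _ => hint j]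
      _ = ∫ x, c • ∑ j, (tiltDen a b y x * g x * x j) •
            (ContinuousLinearMap.proj j : (Fin N → ℝ) →L[ℝ] ℝ) ∂P₀ := by
          rw [integral_smul]
      _ = ∫ x, (tiltDen a b y x * g x) • (c • dotCLM x) ∂P₀ := by
          congr 1; funext x
          apply ContinuousLinearMap.ext; intro v
          simp only [ContinuousLinearMap.smul_apply, ContinuousLinearMap.sum_apply,
            ContinuousLinearMap.proj_apply, smul_eq_mul, dotCLM_apply, dotp]
          simp only [Finset.mul_sum]
          exact Finset.sum_congr rfl fun j _ => by ring
  · -- bound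
    filter_upwards [hR] with x hx
    intro y' hy'
    have hy'n : ‖y'‖ ≤ ‖y‖ + 1 := by
      have := mem_ball_iff_norm.1 hy'
      calc ‖y'‖ = ‖y' - y + y‖ := by ring_nf
        _ ≤ ‖y' - y‖ + ‖y‖ := norm_add_le _ _
        _ ≤ ‖y‖ + 1 := by linarith
    have hden : tiltDen a b y' x ≤ E :=
      tiltDen_le hR0 (by positivity) hx hy'n
    have hgx : |g x| ≤ G := hG x (by simpa [Metric.mem_closedBall, dist_zero_right] using hx)
    have hdn : ‖dotCLM x‖ ≤ N * R :=
      (norm_dotCLM_le x).trans (by have : (0:ℝ) ≤ N := Nat.cast_nonneg N; nlinarith)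
    calc ‖(tiltDen a b y' x * g x) • (c • dotCLM x)‖
        = |tiltDen a b y' x * g x| * (|c| * ‖dotCLM x‖) := by
          rw [norm_smul (tiltDen a b y' x * g x) (c • dotCLM x), norm_smul c (dotCLM x),
            Real.norm_eq_abs, Real.norm_eq_abs]
      _ ≤ (E * G) * (|c| * (N * R)) := by
          have h1 : |tiltDen a b y' x * g x| ≤ E * G := by
            rw [abs_mul, abs_of_pos (tiltDen_pos a b y' x)]
            exact mul_le_mul hden hgx (abs_nonneg _) (le_of_lt hE0)
          have h2 : |c| * ‖dotCLM x‖ ≤ |c| * (N * R) := by gcongr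
          exact mul_le_mul h1 h2 (by positivity) (by positivity)
      _ = E * G * (|c| * (N * R)) := by ring
  · -- differentiability
    refine Filter.Eventually.of_forall fun x y' _ => ?_
    have h2 := (hasFDerivAt_tiltDen a b x y').mul_const (g x)
    have heq : (g x) • (tiltDen a b y' x • ((a / b ^ 2) • dotCLM x))
        = (tiltDen a b y' x * g x) • (c • dotCLM x) := by
      rw [← hc]; simp only [smul_smul]; congr 1; ring
    show HasFDerivAt (fun y' => tiltDen a b y' x * g x)
      ((tiltDen a b y' x * g x) • (c • dotCLM x)) y'
    rw [← heq]; exact h2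

lemma Z_pos (P₀ : Measure (Fin N → ℝ)) [IsProbabilityMeasure P₀] {R : ℝ}
    (hR0 : 0 ≤ R) (hR : ∀ᵐ x ∂P₀, ‖x‖ ≤ R) (a b : ℝ) (y : Fin N → ℝ) :
    0 < ∫ x, tiltDen a b y x ∂P₀ := by
  set m : ℝ := Real.exp (-(|a / b ^ 2| * (N * (‖y‖ * R)) + |a ^ 2 / (2 * b ^ 2)| * (N * (R * R))))
  have hm : 0 < m := Real.exp_pos _
  have hint : Integrable (fun x => tiltDen a b y x) P₀ := by
    simpa [mul_one] using integ_tilt P₀ hR a b y (fun _ => 1) continuous_const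
  have : ∫ x, m ∂P₀ ≤ ∫ x, tiltDen a b y x ∂P₀ := by
    refine integral_mono_ae (integrable_const m) hint ?_
    filter_upwards [hR] with x hx
    exact tiltDen_ge hR0 (norm_nonneg y) hx le_rfl
  simpa using lt_of_lt_of_le (by simpa using hm) this

end VFJ

open VFJ Metric ContinuousLinearMap in
lemma final_algebra {n : ℕ} {Z : ℝ} (hZ : Z ≠ 0) (c k t vi Mi : ℝ)
    (M S v : Fin n → ℝ) :
    t * vi + k * (Mi * (-(Z ^ 2)⁻¹ * (c * ∑ j, M j * v j)) + Z⁻¹ * (c * ∑ j, S j * v j))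
      = c * k * (∑ j, (S j / Z - Mi / Z * (M j / Z)) * v j) + t * vi := by
  have h : ∑ j, (S j / Z - Mi / Z * (M j / Z)) * v j
      = (∑ j, S j * v j) / Z - Mi * (∑ j, M j * v j) / Z ^ 2 := by
    rw [Finset.sum_congr rfl (fun j _ =>
      show (S j / Z - Mi / Z * (M j / Z)) * v j
          = S j * v j / Z - Mi * (M j * v j) / Z ^ 2 by field_simp)]
    rw [Finset.sum_sub_distrib, ← Finset.sum_div, ← Finset.sum_div, ← Finset.mul_sum]
  rw [h]
  field_simp
  ring

/-- **Fluctuation–dissipation for the velocity field.** If `P₀` has compact (bounded)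
support and `β(t) > 0`, the velocity field is differentiable in `y` with Jacobian
`∂b/∂y = (α/β²)(α̇ − β̇α/β) Cov[P_{t,y}] + (β̇/β) I_N`. -/
theorem velocity_field_jacobian
    (N : ℕ) (P₀ : Measure (Fin N → ℝ)) [IsProbabilityMeasure P₀]
    (hsupp : ∃ R : ℝ, P₀ {x | ‖x‖ ≤ R} = 1)
    (a b a' b' : ℝ) (hb : 0 < b) (y : Fin N → ℝ) :
    DifferentiableAt ℝ (velField P₀ a b a' b') y
      ∧ ∀ v : Fin N → ℝ,
          fderiv ℝ (velField P₀ a b a' b') y v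
            = fun i => a / b ^ 2 * (a' - b' * a / b) * (∑ j, tiltCov P₀ a b y i j * v j)
                + (b' / b) * v i := by
  classical
  obtain ⟨R₀, hR₀⟩ := hsupp
  set R := max R₀ 0 with hRdef
  have hR0 : 0 ≤ R := le_max_right _ _
  have hR1 : P₀ {x | ‖x‖ ≤ R} = 1 := by
    refine le_antisymm prob_le_one ?_
    rw [← hR₀]
    exact measure_mono fun x hx => Set.mem_setOf.2 (le_trans hx (le_max_left _ _))
  have hRae : ∀ᵐ x ∂P₀, ‖x‖ ≤ R := VFJ.ae_norm_le P₀ hR1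
  set c := a / b ^ 2 with hc
  set k := a' - b' * a / b with hk
  set Z : ℝ := ∫ x, tiltDen a b y x ∂P₀ with hZdef
  set M : Fin N → ℝ := fun i => ∫ x, tiltDen a b y x * x i ∂P₀ with hMdef
  set S : Fin N → Fin N → ℝ := fun i j => ∫ x, tiltDen a b y x * (x i * x j) ∂P₀
    with hSdef
  have hZpos : 0 < Z := VFJ.Z_pos P₀ hR0 hRae a b y
  have hZne : Z ≠ 0 := ne_of_gt hZpos
  set DZ : (Fin N → ℝ) →L[ℝ] ℝ :=
    c • ∑ j, (M j) • (ContinuousLinearMap.proj j : (Fin N → ℝ) →L[ℝ] ℝ) with hDZ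
  set DM : Fin N → ((Fin N → ℝ) →L[ℝ] ℝ) :=
    fun i => c • ∑ j, (S i j) • (ContinuousLinearMap.proj j : (Fin N → ℝ) →L[ℝ] ℝ)
    with hDM
  have hZd : HasFDerivAt (fun y => ∫ x, tiltDen a b y x ∂P₀) DZ y := by
    have h := VFJ.hasFDerivAt_I P₀ hR0 hRae a b y (fun _ => 1) continuous_const
    simp only [mul_one] at h
    exact h
  have hMd : ∀ i, HasFDerivAt (fun y => ∫ x, tiltDen a b y x * x i ∂P₀) (DM i) y := by
    intro i
    have h := VFJ.hasFDerivAt_I P₀ hR0 hRae a b y (fun x => x i) (continuous_apply i)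
    simp only [mul_assoc] at h
    exact h
  have hinv : HasFDerivAt (fun y => (∫ x, tiltDen a b y x ∂P₀)⁻¹) ((-(Z ^ 2)⁻¹) • DZ) y :=
    (hasDerivAt_inv hZne).comp_hasFDerivAt y hZd
  set L : Fin N → ((Fin N → ℝ) →L[ℝ] ℝ) := fun i =>
    (b' / b) • (ContinuousLinearMap.proj i : (Fin N → ℝ) →L[ℝ] ℝ)
      + k • ((M i) • ((-(Z ^ 2)⁻¹) • DZ) + Z⁻¹ • DM i) with hL
  have hcomp : ∀ i, HasFDerivAt
      (fun y => (b' / b) * y i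
        + k * ((∫ x, tiltDen a b y x * x i ∂P₀) * (∫ x, tiltDen a b y x ∂P₀)⁻¹))
      (L i) y := fun i =>
    ((hasFDerivAt_apply (𝕜 := ℝ) i y).const_mul (b' / b)).add
      (((hMd i).mul hinv).const_mul k)
  have hvel : HasFDerivAt (velField P₀ a b a' b') (ContinuousLinearMap.pi L) y := by
    have h := hasFDerivAt_pi.2 hcomp
    have hfun : velField P₀ a b a' b'
        = fun y i => (b' / b) * y i
          + k * ((∫ x, tiltDen a b y x * x i ∂P₀) * (∫ x, tiltDen a b y x ∂P₀)⁻¹) := by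
      funext y i
      simp [velField, tiltMean, div_eq_mul_inv, hk]
    rw [hfun]
    exact h
  refine ⟨hvel.differentiableAt, ?_⟩
  intro v
  rw [hvel.fderiv]
  funext i
  have hLiv : ContinuousLinearMap.pi L v i
      = (b' / b) * v i + k * (M i * (-(Z ^ 2)⁻¹ * (c * ∑ j, M j * v j))
          + Z⁻¹ * (c * ∑ j, S i j * v j)) := by
    rw [ContinuousLinearMap.pi_apply]
    simp only [hL, hDZ, hDM, ContinuousLinearMap.add_apply, ContinuousLinearMap.smul_apply,
      ContinuousLinearMap.coe_sum', Finset.sum_apply, ContinuousLinearMap.proj_apply,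
      smul_eq_mul]
  have hcovsum : ∑ j, tiltCov P₀ a b y i j * v j
      = ∑ j, (S i j / Z - M i / Z * (M j / Z)) * v j := rfl
  rw [hLiv, hcovsum]
  exact final_algebra hZne c k (b' / b) (v i) (M i) (fun j => M j) (fun j => S i j) v


end
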